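/- In the one-dimensional LQR lower-bound setting with T ≥ 12000, for any deterministic learning algorithm, with probability at least 7/8 at least (2/3)T of the states x_1,…,x_T satisfy |x_t| ≥ 2σ/5. -/

import Mathlib

open MeasureTheory ProbabilityTheory

noncomputable section LQRLowerBound

/-- The state sequence of the scalar LQR system `x_{t+1} = a·x_t + b·u_t + w_t`
with `x_1 = 0` and actions `u_t = π_t (x_1, …, x_t)` chosen by the deterministic
learning algorithm `π`; the noise `w` is indexed from `1`. -/
def lqrState (a b : ℝ) (π : (t : ℕ) → (Fin t → ℝ) → ℝ) (w : ℕ → ℝ) : ℕ → ℝ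
  | 0 => 0
  | 1 => 0
  | t + 2 =>
      a * lqrState a b π w (t + 1)
        + b * π (t + 1) (fun i : Fin (t + 1) => lqrState a b π w (i + 1))
        + w (t + 1)
  termination_by t => t
  decreasing_by all_goals omega

/-- The action `u_t = π_t (x_1, …, x_t)` of the learning algorithm. -/
def lqrAction (a b : ℝ) (π : (t : ℕ) → (Fin t → ℝ) → ℝ) (w : ℕ → ℝ) (t : ℕ) : ℝ :=
  π t fun i : Fin t => lqrState a b π w (i + 1)

/-- The random sign `χ`, as a real number `±1`. -/
def signVal (s : Bool) : ℝ := if s then 1 else -1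

/-- Extend finitely many noise values `(w_1, …, w_T)` to a sequence indexed by `ℕ`
(with `w_t = g (t-1)` for `1 ≤ t ≤ T`). -/
def noiseSeq {T : ℕ} (g : Fin T → ℝ) : ℕ → ℝ := fun t =>
  if h : 1 ≤ t ∧ t ≤ T then g ⟨t - 1, by omega⟩ else 0

/-- The joint law of the uniform random sign `χ = ±1` and the i.i.d. `N(0,σ²)`
noises `w_1, …, w_T`. -/
def lqrMeasure (σ : ℝ) (T : ℕ) : Measure (Bool × (Fin T → ℝ)) :=
  ((PMF.uniformOfFintype Bool).toMeasure).prod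
    (Measure.pi fun _ : Fin T => gaussianReal 0 ⟨σ ^ 2, sq_nonneg σ⟩)

/-- The state `x_t` as a random variable on the sample space, where `b = χ·√ε`. -/
def X (a ε : ℝ) (π : (t : ℕ) → (Fin t → ℝ) → ℝ) {T : ℕ}
    (ω : Bool × (Fin T → ℝ)) (t : ℕ) : ℝ :=
  lqrState a (signVal ω.1 * Real.sqrt ε) π (noiseSeq ω.2) t

/-- The action `u_t` as a random variable on the sample space, where `b = χ·√ε`. -/
def U (a ε : ℝ) (π : (t : ℕ) → (Fin t → ℝ) → ℝ) {T : ℕ}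
    (ω : Bool × (Fin T → ℝ)) (t : ℕ) : ℝ :=
  lqrAction a (signVal ω.1 * Real.sqrt ε) π (noiseSeq ω.2) t

/-- The optimal controller `k⋆ = −abp⋆/(1+b²p⋆)` (whose sign depends on `χ`),
where `b = χ·√ε` and `b² = ε`. -/
def kOpt (a ε pstar : ℝ) (s : Bool) : ℝ :=
  -(a * (signVal s * Real.sqrt ε) * pstar) / (1 + ε * pstar)

/-- The total cost `Σ_{t=1}^T (x_t² + u_t²)`. -/
def lqrTotalCost (a ε : ℝ) (π : (t : ℕ) → (Fin t → ℝ) → ℝ) (T : ℕ)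
    (ω : Bool × (Fin T → ℝ)) : ℝ :=
  ∑ t ∈ Finset.Icc 1 T, (X a ε π ω t ^ 2 + U a ε π ω t ^ 2)

/-- The regret `R_T = Σ_{t=1}^T (x_t² + u_t² − σ²p⋆)`. -/
def lqrRegret (σ a ε pstar : ℝ) (π : (t : ℕ) → (Fin t → ℝ) → ℝ) (T : ℕ)
    (ω : Bool × (Fin T → ℝ)) : ℝ :=
  ∑ t ∈ Finset.Icc 1 T, (X a ε π ω t ^ 2 + U a ε π ω t ^ 2 - σ ^ 2 * pstar)

/- ================= auxiliary development ================= -/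

section Aux

theorem lqrState_congr (a b : ℝ) (π : (t : ℕ) → (Fin t → ℝ) → ℝ) :
    ∀ (t : ℕ) (w w' : ℕ → ℝ), (∀ k, k < t → w k = w' k) →
      lqrState a b π w t = lqrState a b π w' t := by
  intro t
  induction t using Nat.strong_induction_on with
  | _ t ih =>
    intro w w' h
    match t with
    | 0 => rw [lqrState, lqrState]
    | 1 => rw [lqrState, lqrState]
    | (t+2) =>
      rw [lqrState, lqrState]
      have h2 : (fun i : Fin (t+1) => lqrState a b π w (i + 1))
          = (fun i : Fin (t+1) => lqrState a b π w' (i + 1)) :=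
        funext fun i => ih (i+1) (by omega) w w' (fun k hk => h k (by omega))
      rw [ih (t+1) (by omega) w w' (fun k hk => h k (by omega)), h (t+1) (by omega), h2]

/-- state as a function of the finite noise vector -/
def xv (a b : ℝ) (π : (t : ℕ) → (Fin t → ℝ) → ℝ) {T : ℕ} (g : Fin T → ℝ) (t : ℕ) : ℝ :=
  lqrState a b π (noiseSeq g) t

theorem measurable_noise {T : ℕ} (k : ℕ) : Measurable fun g : Fin T → ℝ => noiseSeq g k := by
  unfold noiseSeq
  by_cases h : 1 ≤ k ∧ k ≤ T
  · simpa [h] using measurable_pi_apply _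
  · simp [h]

theorem measurable_xv (a b : ℝ) (π : (t : ℕ) → (Fin t → ℝ) → ℝ) (hπ : ∀ t, Measurable (π t))
    {T : ℕ} : ∀ t : ℕ, Measurable fun g : Fin T → ℝ => xv a b π g t := by
  intro t
  induction t using Nat.strong_induction_on with
  | _ t ih =>
    match t with
    | 0 => unfold xv; rw [show (fun g : Fin T → ℝ => lqrState a b π (noiseSeq g) 0) = fun _ => 0
              from funext fun g => by rw [lqrState]]; exact measurable_const
    | 1 => unfold xv; rw [show (fun g : Fin T → ℝ => lqrState a b π (noiseSeq g) 1) = fun _ => 0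
              from funext fun g => by rw [lqrState]]; exact measurable_const
    | (t+2) =>
      unfold xv
      rw [show (fun g : Fin T → ℝ => lqrState a b π (noiseSeq g) (t+2))
          = fun g => a * xv a b π g (t + 1)
            + b * π (t + 1) (fun i : Fin (t + 1) => xv a b π g (i + 1))
            + noiseSeq g (t + 1) from funext fun g => by rw [lqrState]; rfl]
      refine ((measurable_const.mul (ih (t+1) (by omega))).add
        (measurable_const.mul ((hπ (t+1)).comp
          (measurable_pi_lambda _ fun i => ih (i+1) (by omega))))).add (measurable_noise _)

theorem noiseSeq_update_ne {T : ℕ} (g : Fin T → ℝ) (j : Fin T) (y : ℝ) (k : ℕ)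
    (hk : k ≠ (j : ℕ) + 1) : noiseSeq (Function.update g j y) k = noiseSeq g k := by
  unfold noiseSeq
  by_cases h : 1 ≤ k ∧ k ≤ T
  · simp only [h, dif_pos]
    exact Function.update_of_ne (by simp [Fin.ext_iff]; omega) _ _
  · simp [h]

theorem noiseSeq_update_self {T : ℕ} (g : Fin T → ℝ) (j : Fin T) (y : ℝ) :
    noiseSeq (Function.update g j y) ((j : ℕ) + 1) = y := by
  have h : 1 ≤ (j : ℕ) + 1 ∧ (j : ℕ) + 1 ≤ T := ⟨by omega, j.isLt⟩
  unfold noiseSeq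
  simp only [h, and_self, dif_pos]
  rw [show (⟨(j:ℕ)+1-1, by omega⟩ : Fin T) = j from by simp [Fin.ext_iff]]
  simp

theorem xv_update_of_le (a b : ℝ) (π : (t : ℕ) → (Fin t → ℝ) → ℝ) {T : ℕ}
    (g : Fin T → ℝ) (j : Fin T) (y : ℝ) (s : ℕ) (hs : s ≤ (j : ℕ) + 1) :
    xv a b π (Function.update g j y) s = xv a b π g s :=
  lqrState_congr a b π s _ _ fun k hk => noiseSeq_update_ne g j y k (by omega)

/-- the "drift" part of the state: `x_t = mv t + w_{t-1}` -/
def mv (a b : ℝ) (π : (t : ℕ) → (Fin t → ℝ) → ℝ) {T : ℕ} (g : Fin T → ℝ) (t : ℕ) : ℝ :=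
  a * xv a b π g (t - 1) + b * π (t - 1) (fun i : Fin (t - 1) => xv a b π g (i + 1))

theorem xv_update_top (a b : ℝ) (π : (t : ℕ) → (Fin t → ℝ) → ℝ) {T : ℕ}
    (g : Fin T → ℝ) (j : Fin T) (y : ℝ) :
    xv a b π (Function.update g j y) ((j : ℕ) + 2) = mv a b π g ((j : ℕ) + 2) + y := by
  unfold xv
  rw [lqrState]
  rw [noiseSeq_update_self g j y]
  have h1 : lqrState a b π (noiseSeq (Function.update g j y)) ((j : ℕ) + 1)
      = xv a b π g ((j : ℕ) + 1) := xv_update_of_le a b π g j y _ le_rfl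
  have h2 : (fun i : Fin ((j : ℕ) + 1) => lqrState a b π (noiseSeq (Function.update g j y)) (i + 1))
      = fun i : Fin ((j : ℕ) + 1) => xv a b π g (i + 1) :=
    funext fun i => xv_update_of_le a b π g j y _ (by omega)
  rw [h1, h2]
  rfl

theorem mv_update_of_le (a b : ℝ) (π : (t : ℕ) → (Fin t → ℝ) → ℝ) {T : ℕ}
    (g : Fin T → ℝ) (j : Fin T) (y : ℝ) (s : ℕ) (hs : s ≤ (j : ℕ) + 2) :
    mv a b π (Function.update g j y) s = mv a b π g s := by
  unfold mv
  rw [xv_update_of_le a b π g j y _ (by omega)]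
  have h2 : (fun i : Fin (s - 1) => xv a b π (Function.update g j y) (i + 1))
      = fun i : Fin (s - 1) => xv a b π g (i + 1) :=
    funext fun i => xv_update_of_le a b π g j y _ (by omega)
  rw [h2]

end Aux

section Aux2

/-- the Gaussian noise measure -/
def gm (σ : ℝ) : Measure ℝ := gaussianReal 0 ⟨σ ^ 2, sq_nonneg σ⟩

instance gm_prob (σ : ℝ) : IsProbabilityMeasure (gm σ) := by
  unfold gm; exact instIsProbabilityMeasureGaussianReal _ _

/-- indicator that the state is small -/
def Sv (σ a b : ℝ) (π : (t : ℕ) → (Fin t → ℝ) → ℝ) {T : ℕ} (g : Fin T → ℝ) (t : ℕ) : ℝ :=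
  if |xv a b π g t| < 2 * σ / 5 then 1 else 0

/-- conditional probability that the state is small given the past -/
def qv (σ a b : ℝ) (π : (t : ℕ) → (Fin t → ℝ) → ℝ) {T : ℕ} (g : Fin T → ℝ) (t : ℕ) : ℝ :=
  ((gm σ) {y : ℝ | |mv a b π g t + y| < 2 * σ / 5}).toReal

/-- centered indicator (martingale difference) -/
def Zv (σ a b : ℝ) (π : (t : ℕ) → (Fin t → ℝ) → ℝ) {T : ℕ} (g : Fin T → ℝ) (t : ℕ) : ℝ :=
  Sv σ a b π g t - qv σ a b π g t

theorem gauss_interval_bound (σ : ℝ) (hσ : 0 < σ) (s : Set ℝ) (m c : ℝ) (hc : 0 ≤ c)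
    (hs : s = {y : ℝ | |m + y| < c}) :
    ((gaussianReal 0 ⟨σ ^ 2, sq_nonneg σ⟩) s).toReal ≤ 2 * c / (σ * Real.sqrt (2 * Real.pi)) := by
  have hv : (⟨σ ^ 2, sq_nonneg σ⟩ : NNReal) ≠ 0 := by
    simp [← NNReal.coe_injective.ne_iff]
    positivity
  have hIoo : s = Set.Ioo (-c - m) (c - m) := by
    rw [hs]; ext y; simp [abs_lt]; constructor <;> intro h <;> constructor <;> linarith [h.1, h.2]
  have hb : ∀ x : ℝ, gaussianPDF 0 ⟨σ ^ 2, sq_nonneg σ⟩ x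
      ≤ ENNReal.ofReal ((σ * Real.sqrt (2 * Real.pi))⁻¹) := by
    intro x
    unfold gaussianPDF
    apply ENNReal.ofReal_le_ofReal
    unfold gaussianPDFReal
    change (Real.sqrt (2 * Real.pi * σ ^ 2))⁻¹ * Real.exp (-(x - 0) ^ 2 / (2 * σ ^ 2)) ≤ _
    have h1 : Real.sqrt (2 * Real.pi * σ ^ 2) = σ * Real.sqrt (2 * Real.pi) := by
      rw [show 2 * Real.pi * σ ^ 2 = σ ^ 2 * (2 * Real.pi) by ring,
        Real.sqrt_mul (sq_nonneg σ), Real.sqrt_sq hσ.le]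
    rw [h1]
    have h2 : Real.exp (-(x - 0) ^ 2 / (2 * σ ^ 2)) ≤ 1 := by
      apply Real.exp_le_one_iff.mpr
      apply div_nonpos_of_nonpos_of_nonneg
      · simp [sq_nonneg]
      · positivity
    calc (σ * Real.sqrt (2 * Real.pi))⁻¹ * Real.exp (-(x - 0) ^ 2 / (2 * σ ^ 2))
        ≤ (σ * Real.sqrt (2 * Real.pi))⁻¹ * 1 := by
          apply mul_le_mul_of_nonneg_left h2; positivity
      _ = _ := by ring
  have key : (gaussianReal 0 ⟨σ ^ 2, sq_nonneg σ⟩) s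
      ≤ ENNReal.ofReal ((σ * Real.sqrt (2 * Real.pi))⁻¹) * ENNReal.ofReal (2 * c) := by
    rw [gaussianReal_apply 0 hv s, hIoo]
    calc ∫⁻ x in Set.Ioo (-c - m) (c - m), gaussianPDF 0 ⟨σ ^ 2, sq_nonneg σ⟩ x
        ≤ ∫⁻ _ in Set.Ioo (-c - m) (c - m), ENNReal.ofReal ((σ * Real.sqrt (2 * Real.pi))⁻¹) :=
          lintegral_mono fun x => hb x
      _ = ENNReal.ofReal ((σ * Real.sqrt (2 * Real.pi))⁻¹) * volume (Set.Ioo (-c - m) (c - m)) := by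
          rw [setLIntegral_const]
      _ = _ := by rw [Real.volume_Ioo, show c - m - (-c - m) = 2 * c by ring]
  calc ((gaussianReal 0 ⟨σ ^ 2, sq_nonneg σ⟩) s).toReal
      ≤ (ENNReal.ofReal ((σ * Real.sqrt (2 * Real.pi))⁻¹) * ENNReal.ofReal (2 * c)).toReal := by
        apply ENNReal.toReal_mono _ key
        exact ENNReal.mul_ne_top ENNReal.ofReal_ne_top ENNReal.ofReal_ne_top
    _ = (σ * Real.sqrt (2 * Real.pi))⁻¹ * (2 * c) := by
        rw [ENNReal.toReal_mul, ENNReal.toReal_ofReal (by positivity),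
          ENNReal.toReal_ofReal (by positivity)]
    _ = 2 * c / (σ * Real.sqrt (2 * Real.pi)) := by ring

theorem sqrt_two_pi_ge : (2.5 : ℝ) ≤ Real.sqrt (2 * Real.pi) := by
  rw [show (2.5 : ℝ) = Real.sqrt (2.5 ^ 2) from (Real.sqrt_sq (by norm_num)).symm]
  apply Real.sqrt_le_sqrt
  nlinarith [Real.pi_gt_d6]

theorem qv_nonneg (σ a b : ℝ) (π : (t : ℕ) → (Fin t → ℝ) → ℝ) {T : ℕ} (g : Fin T → ℝ) (t : ℕ) :
    0 ≤ qv σ a b π g t := ENNReal.toReal_nonneg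

theorem qv_le_one (σ a b : ℝ) (π : (t : ℕ) → (Fin t → ℝ) → ℝ) {T : ℕ} (g : Fin T → ℝ) (t : ℕ) :
    qv σ a b π g t ≤ 1 := by
  unfold qv
  rw [show (1 : ℝ) = (1 : ENNReal).toReal by simp]
  exact ENNReal.toReal_mono ENNReal.one_ne_top prob_le_one

theorem qv_le (σ a b : ℝ) (hσ : 0 < σ) (π : (t : ℕ) → (Fin t → ℝ) → ℝ) {T : ℕ}
    (g : Fin T → ℝ) (t : ℕ) : qv σ a b π g t ≤ 8 / 25 := by
  have h1 := gauss_interval_bound σ hσ _ (mv a b π g t) (2 * σ / 5) (by positivity) rfl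
  refine le_trans h1 ?_
  have h2 := sqrt_two_pi_ge
  have h3 : 0 < σ * Real.sqrt (2 * Real.pi) := by positivity
  rw [div_le_iff₀ h3]
  nlinarith

theorem Sv_bound (σ a b : ℝ) (π : (t : ℕ) → (Fin t → ℝ) → ℝ) {T : ℕ} (g : Fin T → ℝ) (t : ℕ) :
    0 ≤ Sv σ a b π g t ∧ Sv σ a b π g t ≤ 1 := by
  unfold Sv; split <;> norm_num

theorem Zv_abs_le_one (σ a b : ℝ) (π : (t : ℕ) → (Fin t → ℝ) → ℝ) {T : ℕ}
    (g : Fin T → ℝ) (t : ℕ) : |Zv σ a b π g t| ≤ 1 := by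
  have h1 := Sv_bound σ a b π g t
  have h2 := qv_nonneg σ a b π g t
  have h3 := qv_le_one σ a b π g t
  unfold Zv
  rw [abs_le]
  constructor <;> linarith [h1.1, h1.2]

theorem measurable_mv (a b : ℝ) (π : (t : ℕ) → (Fin t → ℝ) → ℝ) (hπ : ∀ t, Measurable (π t))
    {T : ℕ} (t : ℕ) : Measurable fun g : Fin T → ℝ => mv a b π g t := by
  unfold mv
  exact (measurable_const.mul (measurable_xv a b π hπ _)).add
    (measurable_const.mul ((hπ (t-1)).comp
      (measurable_pi_lambda _ fun i => measurable_xv a b π hπ _)))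

theorem measurable_qv (σ a b : ℝ) (π : (t : ℕ) → (Fin t → ℝ) → ℝ) (hπ : ∀ t, Measurable (π t))
    {T : ℕ} (t : ℕ) : Measurable fun g : Fin T → ℝ => qv σ a b π g t := by
  have hQ : Measurable fun m : ℝ => (gm σ) {y : ℝ | |m + y| < 2 * σ / 5} := by
    have hset : MeasurableSet {p : ℝ × ℝ | |p.1 + p.2| < 2 * σ / 5} :=
      measurableSet_lt ((measurable_fst.add measurable_snd).abs) measurable_const
    have h1 : Measurable fun p : ℝ × ℝ =>
        ({p : ℝ × ℝ | |p.1 + p.2| < 2 * σ / 5}.indicator (fun _ => (1 : ENNReal))) p :=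
      measurable_const.indicator hset
    have h2 := h1.lintegral_prod_right' (ν := gm σ)
    have h3 : ∀ m : ℝ, ∫⁻ y, ({p : ℝ × ℝ | |p.1 + p.2| < 2 * σ / 5}.indicator
        (fun _ => (1 : ENNReal))) (m, y) ∂(gm σ) = (gm σ) {y : ℝ | |m + y| < 2 * σ / 5} := by
      intro m
      have : ∀ y : ℝ, ({p : ℝ × ℝ | |p.1 + p.2| < 2 * σ / 5}.indicator
          (fun _ => (1 : ENNReal))) (m, y)
          = ({y : ℝ | |m + y| < 2 * σ / 5}.indicator (fun _ => (1 : ENNReal))) y := by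
        intro y
        simp only [Set.indicator_apply, Set.mem_setOf_eq]
      simp_rw [this]
      exact lintegral_indicator_one (measurableSet_lt ((measurable_const.add measurable_id').abs)
        measurable_const)
    simp_rw [h3] at h2
    exact h2
  exact ENNReal.measurable_toReal.comp (hQ.comp (measurable_mv a b π hπ t))

theorem measurable_Sv (σ a b : ℝ) (π : (t : ℕ) → (Fin t → ℝ) → ℝ) (hπ : ∀ t, Measurable (π t))
    {T : ℕ} (t : ℕ) : Measurable fun g : Fin T → ℝ => Sv σ a b π g t := by
  unfold Sv
  exact Measurable.ite (measurableSet_lt (measurable_xv a b π hπ t).abs measurable_const)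
    measurable_const measurable_const

theorem measurable_Zv (σ a b : ℝ) (π : (t : ℕ) → (Fin t → ℝ) → ℝ) (hπ : ∀ t, Measurable (π t))
    {T : ℕ} (t : ℕ) : Measurable fun g : Fin T → ℝ => Zv σ a b π g t :=
  (measurable_Sv σ a b π hπ t).sub (measurable_qv σ a b π hπ t)

end Aux2

section Aux3

theorem bounded_integrable {α : Type*} [MeasurableSpace α] (μ : Measure α)
    [IsProbabilityMeasure μ] (F : α → ℝ) (hF : Measurable F) (C : ℝ) (hC : ∀ x, |F x| ≤ C) :
    Integrable F μ :=
  Integrable.mono' (integrable_const C) hF.aestronglyMeasurable (ae_of_all _ hC)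

theorem integral_update_rerandomize (γ : Measure ℝ) [IsProbabilityMeasure γ] {T : ℕ}
    (j : Fin T) (F : (Fin T → ℝ) → ℝ) (hF : Measurable F) (C : ℝ) (hC : ∀ g, |F g| ≤ C) :
    ∫ g, F g ∂(Measure.pi fun _ : Fin T => γ)
      = ∫ g, ∫ y, F (Function.update g j y) ∂γ ∂(Measure.pi fun _ : Fin T => γ) := by
  obtain ⟨n, rfl⟩ : ∃ n, T = n + 1 := ⟨T - 1, by have := j.pos; omega⟩
  set P : Measure (Fin (n+1) → ℝ) := Measure.pi fun _ => γ with hP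
  set P' : Measure (Fin n → ℝ) := Measure.pi fun _ => γ with hP'
  have mp : MeasurePreserving (MeasurableEquiv.piFinSuccAbove (fun _ => ℝ) j) P
      (γ.prod (Measure.pi fun _ => γ)) := measurePreserving_piFinSuccAbove (fun _ => γ) j
  set e := MeasurableEquiv.piFinSuccAbove (fun _ : Fin (n+1) => ℝ) j with he
  have mps : MeasurePreserving e.symm (γ.prod P') P := MeasurePreserving.symm e mp
  have hsymm : ∀ (y : ℝ) (r : Fin n → ℝ), e.symm (y, r) = j.insertNth y r := fun y r => rfl
  have hFi : Integrable F P := bounded_integrable P F hF C hC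
  have hFe : Integrable (fun z : ℝ × (Fin n → ℝ) => F (e.symm z)) (γ.prod P') :=
    (mps.integrable_comp_emb e.symm.measurableEmbedding (g := F)).mpr hFi
  set H : (Fin n → ℝ) → ℝ := fun r => ∫ y, F (j.insertNth y r) ∂γ with hH
  have hins : Measurable (fun p : (Fin n → ℝ) × ℝ => F (j.insertNth p.2 p.1)) := by
    apply hF.comp
    apply measurable_pi_lambda
    intro i
    by_cases hij : i = j
    · subst hij; simpa using measurable_snd
    · obtain ⟨k, rfl⟩ := Fin.exists_succAbove_eq hij
      simp; exact (measurable_pi_apply k).comp measurable_fst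
  have hHmeas : StronglyMeasurable H :=
    StronglyMeasurable.integral_prod_right'
      (f := fun p : (Fin n → ℝ) × ℝ => F (j.insertNth p.2 p.1)) hins.stronglyMeasurable
  have hHbdd : ∀ r, |H r| ≤ C := by
    intro r
    rw [← Real.norm_eq_abs]
    calc ‖∫ y, F (j.insertNth y r) ∂γ‖ ≤ C * ((γ Set.univ).toReal) :=
          norm_integral_le_of_norm_le_const (ae_of_all _ fun y => by
            rw [Real.norm_eq_abs]; exact hC _)
      _ = C := by simp
  set G : (Fin (n+1) → ℝ) → ℝ := fun g => ∫ y, F (Function.update g j y) ∂γ with hG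
  have hGH : ∀ z : ℝ × (Fin n → ℝ), G (e.symm z) = H z.2 := by
    rintro ⟨y0, r⟩
    rw [hsymm]
    simp only [hG, hH]
    congr 1
    funext y
    rw [Fin.update_insertNth]
  have hHint : Integrable (fun z : ℝ × (Fin n → ℝ) => H z.2) (γ.prod P') :=
    bounded_integrable _ _ (hHmeas.measurable.comp measurable_snd) C fun z => hHbdd z.2
  have hswap : Integrable (Function.uncurry fun (r : Fin n → ℝ) (y : ℝ) =>
      F (j.insertNth y r)) (P'.prod γ) := by
    have : Integrable ((fun z : ℝ × (Fin n → ℝ) => F (e.symm z)) ∘ Prod.swap) (P'.prod γ) :=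
      ((Measure.measurePreserving_swap (μ := P') (ν := γ)).integrable_comp
        hFe.aestronglyMeasurable).mpr hFe
    exact this
  calc ∫ g, F g ∂P = ∫ z, F (e.symm z) ∂(γ.prod P') := (mps.integral_comp' F).symm
    _ = ∫ y, ∫ r, F (e.symm (y, r)) ∂P' ∂γ := integral_prod _ hFe
    _ = ∫ y, ∫ r, F (j.insertNth y r) ∂P' ∂γ := by simp_rw [hsymm]
    _ = ∫ r, ∫ y, F (j.insertNth y r) ∂γ ∂P' := (integral_integral_swap hswap).symm
    _ = ∫ r, H r ∂P' := rfl
    _ = ∫ y, ∫ r, H r ∂P' ∂γ := by rw [integral_const]; simp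
    _ = ∫ z, H z.2 ∂(γ.prod P') := (integral_prod _ hHint).symm
    _ = ∫ z, G (e.symm z) ∂(γ.prod P') := by simp_rw [hGH]
    _ = ∫ g, G g ∂P := mps.integral_comp' G

theorem meas_set_ite (m c : ℝ) : MeasurableSet {y : ℝ | |m + y| < c} :=
  measurableSet_lt ((measurable_const.add measurable_id').abs) measurable_const

theorem integrable_ite_gm (σ m c : ℝ) :
    Integrable (fun y : ℝ => if |m + y| < c then (1 : ℝ) else 0) (gm σ) :=
  bounded_integrable _ _ (Measurable.ite (meas_set_ite m c) measurable_const measurable_const)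
    1 (fun y => by split <;> norm_num)

theorem int_ite_gm (σ m c : ℝ) :
    ∫ y, (if |m + y| < c then (1 : ℝ) else 0) ∂(gm σ)
      = ((gm σ) {y : ℝ | |m + y| < c}).toReal := by
  rw [show (fun y : ℝ => if |m + y| < c then (1 : ℝ) else 0)
      = {y : ℝ | |m + y| < c}.indicator (fun _ => 1) from
    funext fun y => by simp [Set.indicator_apply, Set.mem_setOf_eq]]
  rw [integral_indicator_const (1 : ℝ) (meas_set_ite m c)]
  simp
  rfl

theorem Sv_update_eq (σ a b : ℝ) (π : (t : ℕ) → (Fin t → ℝ) → ℝ) {T : ℕ}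
    (g : Fin T → ℝ) (j : Fin T) (y : ℝ) :
    Sv σ a b π (Function.update g j y) ((j : ℕ) + 2)
      = if |mv a b π g ((j : ℕ) + 2) + y| < 2 * σ / 5 then 1 else 0 := by
  unfold Sv
  rw [xv_update_top]

theorem qv_update_eq (σ a b : ℝ) (π : (t : ℕ) → (Fin t → ℝ) → ℝ) {T : ℕ}
    (g : Fin T → ℝ) (j : Fin T) (y : ℝ) :
    qv σ a b π (Function.update g j y) ((j : ℕ) + 2) = qv σ a b π g ((j : ℕ) + 2) := by
  unfold qv
  rw [mv_update_of_le a b π g j y _ le_rfl]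

theorem Zv_update_of_le (σ a b : ℝ) (π : (t : ℕ) → (Fin t → ℝ) → ℝ) {T : ℕ}
    (g : Fin T → ℝ) (j : Fin T) (y : ℝ) (s : ℕ) (hs : s ≤ (j : ℕ) + 1) :
    Zv σ a b π (Function.update g j y) s = Zv σ a b π g s := by
  unfold Zv Sv qv
  rw [xv_update_of_le a b π g j y s hs, mv_update_of_le a b π g j y s (by omega)]

theorem inner_Z (σ a b : ℝ) (π : (t : ℕ) → (Fin t → ℝ) → ℝ) {T : ℕ}
    (g : Fin T → ℝ) (j : Fin T) :
    ∫ y, Zv σ a b π (Function.update g j y) ((j : ℕ) + 2) ∂(gm σ) = 0 := by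
  simp_rw [Zv, Sv_update_eq, qv_update_eq]
  rw [integral_sub (integrable_ite_gm σ _ _) (integrable_const _), int_ite_gm, integral_const]
  simp [qv]

theorem inner_sq (σ a b : ℝ) (π : (t : ℕ) → (Fin t → ℝ) → ℝ) {T : ℕ}
    (g : Fin T → ℝ) (j : Fin T) :
    ∫ y, (Zv σ a b π (Function.update g j y) ((j : ℕ) + 2)) ^ 2 ∂(gm σ)
      = qv σ a b π g ((j : ℕ) + 2) - (qv σ a b π g ((j : ℕ) + 2)) ^ 2 := by
  have hrw : ∀ y : ℝ, (Zv σ a b π (Function.update g j y) ((j : ℕ) + 2)) ^ 2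
      = (if |mv a b π g ((j : ℕ) + 2) + y| < 2 * σ / 5 then (1 : ℝ) else 0)
          * (1 - 2 * qv σ a b π g ((j : ℕ) + 2)) + (qv σ a b π g ((j : ℕ) + 2)) ^ 2 := by
    intro y
    rw [Zv, Sv_update_eq, qv_update_eq]
    split <;> ring
  simp_rw [hrw]
  rw [integral_add ((integrable_ite_gm σ _ _).mul_const _) (integrable_const _),
    integral_mul_const, int_ite_gm, integral_const]
  have : ((gm σ) {y : ℝ | |mv a b π g ((j : ℕ) + 2) + y| < 2 * σ / 5}).toReal
      = qv σ a b π g ((j : ℕ) + 2) := rfl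
  rw [this]
  simp
  ring

end Aux3

section Aux4

theorem orth (σ a b : ℝ) (π : (t : ℕ) → (Fin t → ℝ) → ℝ) (hπ : ∀ t, Measurable (π t))
    {T : ℕ} (j : Fin T) (s : ℕ) (hs : s ≤ (j : ℕ) + 1) :
    ∫ g, Zv σ a b π g s * Zv σ a b π g ((j : ℕ) + 2)
      ∂(Measure.pi fun _ : Fin T => gm σ) = 0 := by
  rw [integral_update_rerandomize (gm σ) j (fun g => Zv σ a b π g s * Zv σ a b π g ((j : ℕ) + 2))
    ((measurable_Zv σ a b π hπ s).mul (measurable_Zv σ a b π hπ _) :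
      Measurable fun g => Zv σ a b π g s * Zv σ a b π g ((j : ℕ) + 2)) 1
    (fun g => by
      rw [abs_mul]
      exact mul_le_one₀ (Zv_abs_le_one σ a b π g s) (abs_nonneg _) (Zv_abs_le_one σ a b π g _))]
  calc ∫ g, ∫ y, Zv σ a b π (Function.update g j y) s
          * Zv σ a b π (Function.update g j y) ((j : ℕ) + 2) ∂(gm σ)
          ∂(Measure.pi fun _ : Fin T => gm σ)
      = ∫ _g, (0 : ℝ) ∂(Measure.pi fun _ : Fin T => gm σ) := by
        apply integral_congr_ae
        apply ae_of_all
        intro g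
        simp_rw [Zv_update_of_le σ a b π g j _ s hs]
        rw [integral_const_mul, inner_Z σ a b π g j]
        ring
    _ = 0 := by simp

theorem varb (σ a b : ℝ) (π : (t : ℕ) → (Fin t → ℝ) → ℝ) (hπ : ∀ t, Measurable (π t))
    {T : ℕ} (j : Fin T) :
    ∫ g, (Zv σ a b π g ((j : ℕ) + 2)) ^ 2 ∂(Measure.pi fun _ : Fin T => gm σ) ≤ 1 / 4 := by
  rw [integral_update_rerandomize (gm σ) j _
    ((measurable_Zv σ a b π hπ _).pow measurable_const) 1
    (fun g => by
      rw [abs_pow]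
      exact pow_le_one₀ (abs_nonneg _) (Zv_abs_le_one σ a b π g _))]
  calc ∫ g, ∫ y, (Zv σ a b π (Function.update g j y) ((j : ℕ) + 2)) ^ 2 ∂(gm σ)
          ∂(Measure.pi fun _ : Fin T => gm σ)
      = ∫ g, (qv σ a b π g ((j : ℕ) + 2) - (qv σ a b π g ((j : ℕ) + 2)) ^ 2)
          ∂(Measure.pi fun _ : Fin T => gm σ) :=
        integral_congr_ae (ae_of_all _ fun g => inner_sq σ a b π g j)
    _ ≤ ∫ _g, (1 / 4 : ℝ) ∂(Measure.pi fun _ : Fin T => gm σ) := by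
        apply integral_mono
        · refine bounded_integrable _ _
            ((measurable_qv σ a b π hπ _).sub ((measurable_qv σ a b π hπ _).pow measurable_const) :
              Measurable fun g => qv σ a b π g ((j : ℕ) + 2) - qv σ a b π g ((j : ℕ) + 2) ^ 2)
            (C := 1) ?_
          intro g
          have h1 := qv_nonneg σ a b π g ((j : ℕ) + 2)
          have h2 := qv_le_one σ a b π g ((j : ℕ) + 2)
          rw [abs_le]
          constructor <;> nlinarith
        · exact integrable_const _
        · intro g
          have h1 := qv_nonneg σ a b π g ((j : ℕ) + 2)
          have h2 := qv_le_one σ a b π g ((j : ℕ) + 2)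
          simp only
          nlinarith [sq_nonneg (qv σ a b π g ((j : ℕ) + 2) - 1/2)]
    _ = 1 / 4 := by simp

theorem integrable_ZZ (σ a b : ℝ) (π : (t : ℕ) → (Fin t → ℝ) → ℝ) (hπ : ∀ t, Measurable (π t))
    {T : ℕ} (s t : ℕ) :
    Integrable (fun g : Fin T → ℝ => Zv σ a b π g s * Zv σ a b π g t)
      (Measure.pi fun _ : Fin T => gm σ) := by
  refine bounded_integrable _ _ ((measurable_Zv σ a b π hπ s).mul (measurable_Zv σ a b π hπ t) :
    Measurable fun g => Zv σ a b π g s * Zv σ a b π g t) 1 ?_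
  intro g
  rw [abs_mul]
  exact mul_le_one₀ (Zv_abs_le_one σ a b π g s) (abs_nonneg _) (Zv_abs_le_one σ a b π g t)

theorem var_sum (σ a b : ℝ) (π : (t : ℕ) → (Fin t → ℝ) → ℝ) (hπ : ∀ t, Measurable (π t))
    {T : ℕ} (hT : 1 ≤ T) :
    ∫ g, (∑ t ∈ Finset.Icc 2 T, Zv σ a b π g t) ^ 2 ∂(Measure.pi fun _ : Fin T => gm σ)
      ≤ ((T : ℝ) - 1) / 4 := by
  have hexp : ∀ g : Fin T → ℝ, (∑ t ∈ Finset.Icc 2 T, Zv σ a b π g t) ^ 2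
      = ∑ s ∈ Finset.Icc 2 T, ∑ t ∈ Finset.Icc 2 T, Zv σ a b π g s * Zv σ a b π g t := by
    intro g
    rw [sq, Finset.sum_mul_sum]
  simp_rw [hexp]
  rw [integral_finset_sum _ (fun s _ => integrable_finset_sum _
    (fun t _ => integrable_ZZ σ a b π hπ s t))]
  have hterm : ∀ s ∈ Finset.Icc 2 T,
      (∫ g, ∑ t ∈ Finset.Icc 2 T, Zv σ a b π g s * Zv σ a b π g t
        ∂(Measure.pi fun _ : Fin T => gm σ)) ≤ 1 / 4 := by
    intro s hs
    rw [Finset.mem_Icc] at hs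
    rw [integral_finset_sum _ (fun t _ => integrable_ZZ σ a b π hπ s t)]
    have hterm2 : ∀ t ∈ Finset.Icc 2 T,
        (∫ g, Zv σ a b π g s * Zv σ a b π g t ∂(Measure.pi fun _ : Fin T => gm σ))
          ≤ if t = s then 1 / 4 else 0 := by
      intro t ht
      rw [Finset.mem_Icc] at ht
      rcases lt_trichotomy s t with h | h | h
      · rw [if_neg (by omega)]
        have hj : ∃ j : Fin T, (j : ℕ) + 2 = t := ⟨⟨t - 2, by omega⟩, by simp; omega⟩
        obtain ⟨j, rfl⟩ := hj
        exact le_of_eq (orth σ a b π hπ j s (by omega))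
      · subst h
        rw [if_pos rfl]
        have hj : ∃ j : Fin T, (j : ℕ) + 2 = s := ⟨⟨s - 2, by omega⟩, by simp; omega⟩
        obtain ⟨j, rfl⟩ := hj
        have := varb σ a b π hπ j
        calc ∫ g, Zv σ a b π g ((j : ℕ) + 2) * Zv σ a b π g ((j : ℕ) + 2)
              ∂(Measure.pi fun _ : Fin T => gm σ)
            = ∫ g, (Zv σ a b π g ((j : ℕ) + 2)) ^ 2 ∂(Measure.pi fun _ : Fin T => gm σ) := by
              simp_rw [sq]
          _ ≤ 1 / 4 := this
      · rw [if_neg (by omega)]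
        have hj : ∃ j : Fin T, (j : ℕ) + 2 = s := ⟨⟨s - 2, by omega⟩, by simp; omega⟩
        obtain ⟨j, rfl⟩ := hj
        refine le_of_eq ?_
        rw [show (fun g : Fin T → ℝ => Zv σ a b π g ((j : ℕ) + 2) * Zv σ a b π g t)
            = fun g : Fin T → ℝ => Zv σ a b π g t * Zv σ a b π g ((j : ℕ) + 2) from
          funext fun g => mul_comm _ _]
        exact orth σ a b π hπ j t (by omega)
    calc ∑ t ∈ Finset.Icc 2 T, ∫ g, Zv σ a b π g s * Zv σ a b π g t
          ∂(Measure.pi fun _ : Fin T => gm σ)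
        ≤ ∑ t ∈ Finset.Icc 2 T, if t = s then (1 / 4 : ℝ) else 0 :=
          Finset.sum_le_sum hterm2
      _ = 1 / 4 := by
          rw [Finset.sum_ite_eq' (Finset.Icc 2 T) s fun _ => (1 / 4 : ℝ)]
          rw [if_pos (Finset.mem_Icc.mpr hs)]
  calc ∑ s ∈ Finset.Icc 2 T, ∫ g, ∑ t ∈ Finset.Icc 2 T, Zv σ a b π g s * Zv σ a b π g t
        ∂(Measure.pi fun _ : Fin T => gm σ)
      ≤ ∑ _s ∈ Finset.Icc 2 T, (1 / 4 : ℝ) := Finset.sum_le_sum hterm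
    _ = ((T : ℝ) - 1) / 4 := by
        rw [Finset.sum_const, Nat.card_Icc]
        rw [nsmul_eq_mul, Nat.cast_sub (show 2 ≤ T + 1 by omega)]
        push_cast
        ring

end Aux4

section Aux5

set_option maxHeartbeats 2000000 in
theorem core_bound (σ : ℝ) (hσ : 0 < σ) (T : ℕ) (hT : 12000 ≤ T) (a b : ℝ)
    (π : (t : ℕ) → (Fin t → ℝ) → ℝ) (hπ : ∀ t, Measurable (π t)) :
    (7 : ENNReal) / 8 ≤ (Measure.pi fun _ : Fin T => gm σ)
      {g : Fin T → ℝ | (2 / 3 : ℝ) * T ≤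
        ∑ t ∈ Finset.Icc 1 T, (if 2 * σ / 5 ≤ |xv a b π g t| then (1 : ℝ) else 0)} := by
  set P := (Measure.pi fun _ : Fin T => gm σ) with hPdef
  set V : (Fin T → ℝ) → ℝ := fun g => ∑ t ∈ Finset.Icc 2 T, Zv σ a b π g t with hVdef
  set θ : ℝ := ((T : ℝ) - 51) / 75 with hθdef
  have hT' : (12000 : ℝ) ≤ (T : ℝ) := by exact_mod_cast hT
  have hθpos : 0 < θ := by rw [hθdef]; linarith
  have hmeasSum : Measurable fun g : Fin T → ℝ =>
      ∑ t ∈ Finset.Icc 1 T, (if 2 * σ / 5 ≤ |xv a b π g t| then (1 : ℝ) else 0) :=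
    Finset.measurable_sum _ fun t _ => Measurable.ite
      (measurableSet_le measurable_const (measurable_xv a b π hπ t).abs)
      measurable_const measurable_const
  set Good := {g : Fin T → ℝ | (2 / 3 : ℝ) * T ≤
      ∑ t ∈ Finset.Icc 1 T, (if 2 * σ / 5 ≤ |xv a b π g t| then (1 : ℝ) else 0)} with hGdef
  have hgood : MeasurableSet Good := measurableSet_le measurable_const hmeasSum
  have hVmeas : Measurable V := Finset.measurable_sum _ fun t _ => measurable_Zv σ a b π hπ t
  have hVabs : ∀ g, |V g| ≤ (T : ℝ) := by
    intro g
    calc |V g| ≤ ∑ t ∈ Finset.Icc 2 T, |Zv σ a b π g t| := Finset.abs_sum_le_sum_abs _ _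
      _ ≤ ∑ _t ∈ Finset.Icc 2 T, (1 : ℝ) :=
          Finset.sum_le_sum fun t _ => Zv_abs_le_one σ a b π g t
      _ = ((T + 1 - 2 : ℕ) : ℝ) := by rw [Finset.sum_const, Nat.card_Icc, nsmul_eq_mul, mul_one]
      _ ≤ (T : ℝ) := by
          rw [Nat.cast_sub (by omega)]
          push_cast
          linarith
  have hV2int : Integrable (fun g => (V g) ^ 2) P := by
    apply bounded_integrable _ _ (hVmeas.pow measurable_const) ((T : ℝ) ^ 2)
    intro g
    rw [abs_pow]
    exact pow_le_pow_left₀ (abs_nonneg _) (hVabs g) 2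
  have hVar : ∫ g, (V g) ^ 2 ∂P ≤ ((T : ℝ) - 1) / 4 := var_sum σ a b π hπ (by omega)
  -- the bad event is included in the Chebyshev event
  have hsub : Goodᶜ ⊆ {g : Fin T → ℝ |
      ENNReal.ofReal (θ ^ 2) ≤ ENNReal.ofReal ((V g) ^ 2)} := by
    intro g hg
    simp only [hGdef, Set.mem_compl_iff, Set.mem_setOf_eq, not_le] at hg
    have hLS : ∀ t, (if 2 * σ / 5 ≤ |xv a b π g t| then (1 : ℝ) else 0)
        = 1 - Sv σ a b π g t := by
      intro t
      unfold Sv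
      by_cases h : 2 * σ / 5 ≤ |xv a b π g t|
      · rw [if_pos h, if_neg (not_lt.mpr h)]; ring
      · rw [if_neg h, if_pos (not_le.mp h)]; ring
    rw [Finset.sum_congr rfl fun t _ => hLS t, Finset.sum_sub_distrib, Finset.sum_const,
      Nat.card_Icc] at hg
    have hsplit : Finset.Icc 1 T = insert 1 (Finset.Icc 2 T) := by
      ext k
      simp only [Finset.mem_Icc, Finset.mem_insert]
      omega
    have hx1 : xv a b π g 1 = 0 := by unfold xv; rw [lqrState]
    have hS1 : Sv σ a b π g 1 = 1 := by
      unfold Sv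
      rw [hx1, if_pos (by rw [abs_zero]; positivity)]
    have hsum1 : ∑ t ∈ Finset.Icc 1 T, Sv σ a b π g t
        = 1 + ∑ t ∈ Finset.Icc 2 T, Sv σ a b π g t := by
      rw [hsplit, Finset.sum_insert (by simp), hS1]
    have hq : ∑ t ∈ Finset.Icc 2 T, Sv σ a b π g t
        = V g + ∑ t ∈ Finset.Icc 2 T, qv σ a b π g t := by
      rw [hVdef, ← Finset.sum_add_distrib]
      exact Finset.sum_congr rfl fun t _ => by rw [Zv]; ring
    have hqb : ∑ t ∈ Finset.Icc 2 T, qv σ a b π g t ≤ 8 / 25 * ((T : ℝ) - 1) := by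
      calc ∑ t ∈ Finset.Icc 2 T, qv σ a b π g t
          ≤ ∑ _t ∈ Finset.Icc 2 T, (8 / 25 : ℝ) :=
            Finset.sum_le_sum fun t _ => qv_le σ a b hσ π g t
        _ = ((T + 1 - 2 : ℕ) : ℝ) * (8 / 25) := by rw [Finset.sum_const, nsmul_eq_mul, Nat.card_Icc]
        _ = 8 / 25 * ((T : ℝ) - 1) := by
            rw [Nat.cast_sub (by omega)]
            push_cast
            ring
    have hcard1 : ((T + 1 - 1 : ℕ) : ℝ) = (T : ℝ) := by
      rw [Nat.cast_sub (by omega)]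
      push_cast
      ring
    rw [nsmul_eq_mul, mul_one, hcard1, hsum1, hq] at hg
    have hθV : θ ≤ V g := by rw [hθdef]; linarith
    show ENNReal.ofReal (θ ^ 2) ≤ ENNReal.ofReal ((V g) ^ 2)
    exact ENNReal.ofReal_le_ofReal (by nlinarith)
  -- Chebyshev/Markov
  have hmark := mul_meas_ge_le_lintegral₀ (μ := P)
    (f := fun g => ENNReal.ofReal ((V g) ^ 2))
    ((Measurable.ennreal_ofReal (hVmeas.pow measurable_const)).aemeasurable)
    (ENNReal.ofReal (θ ^ 2))
  have hlint : ∫⁻ g, ENNReal.ofReal ((V g) ^ 2) ∂P = ENNReal.ofReal (∫ g, (V g) ^ 2 ∂P) :=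
    (ofReal_integral_eq_lintegral_ofReal hV2int (ae_of_all _ fun g => sq_nonneg _)).symm
  have hchain : ENNReal.ofReal (θ ^ 2) * P Goodᶜ
      ≤ ENNReal.ofReal (θ ^ 2) * ENNReal.ofReal (1 / 8) := by
    calc ENNReal.ofReal (θ ^ 2) * P Goodᶜ
        ≤ ENNReal.ofReal (θ ^ 2)
            * P {g : Fin T → ℝ | ENNReal.ofReal (θ ^ 2) ≤ ENNReal.ofReal ((V g) ^ 2)} :=
          mul_le_mul_right (measure_mono hsub) _
      _ ≤ ∫⁻ g, ENNReal.ofReal ((V g) ^ 2) ∂P := hmark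
      _ = ENNReal.ofReal (∫ g, (V g) ^ 2 ∂P) := hlint
      _ ≤ ENNReal.ofReal (((T : ℝ) - 1) / 4) := ENNReal.ofReal_le_ofReal hVar
      _ ≤ ENNReal.ofReal (θ ^ 2 * (1 / 8)) := by
          apply ENNReal.ofReal_le_ofReal
          rw [hθdef]
          nlinarith
      _ = ENNReal.ofReal (θ ^ 2) * ENNReal.ofReal (1 / 8) :=
          ENNReal.ofReal_mul (sq_nonneg θ)
  have hPbad : P Goodᶜ ≤ ENNReal.ofReal (1 / 8) := by
    have hne0 : ENNReal.ofReal (θ ^ 2) ≠ 0 := (ENNReal.ofReal_pos.mpr (by positivity)).ne'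
    exact (ENNReal.mul_le_mul_iff_right hne0 ENNReal.ofReal_ne_top).mp hchain
  have h18 : ENNReal.ofReal (1 / 8) = (1 : ENNReal) / 8 := by
    rw [show (1 : ℝ) / 8 = ((8 : ℝ))⁻¹ by norm_num, ENNReal.ofReal_inv_of_pos (by norm_num)]
    rw [ENNReal.ofReal_ofNat]
    rw [one_div]
  have hPbad' : P Goodᶜ ≤ (1 : ENNReal) / 8 := h18 ▸ hPbad
  have hsumP : P Good + P Goodᶜ = 1 := by
    rw [measure_add_measure_compl hgood]
    exact measure_univ
  have key1 : (1 : ENNReal) - (1 : ENNReal) / 8 = 7 / 8 := by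
    have h78 : (7 : ENNReal) / 8 + 1 / 8 = 1 := by
      rw [ENNReal.div_add_div_same]
      rw [show (7 : ENNReal) + 1 = 8 by norm_num]
      exact ENNReal.div_self (by norm_num) (by norm_num)
    exact ENNReal.sub_eq_of_eq_add (by norm_num) h78.symm
  calc (7 : ENNReal) / 8 = 1 - 1 / 8 := key1.symm
    _ ≤ 1 - P Goodᶜ := tsub_le_tsub_left hPbad' 1
    _ ≤ P Good := by
        rw [tsub_le_iff_right]
        rw [hsumP]

end Aux5


set_option maxHeartbeats 1000000 in
/-- **Lemma (most states are large).**
In the one-dimensional LQR lower-bound setting with `T ≥ 12000`, for any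
deterministic learning algorithm, with probability at least `7/8` at least
`(2/3)T` of the states `x_1, …, x_T` satisfy `|x_t| ≥ 2σ/5`. -/
theorem many_large_states (σ : ℝ) (hσ : 0 < σ) (T : ℕ) (hT : 12000 ≤ T)
    (ε a : ℝ)
    (hε0 : 0 < ε) (hε1 : ε ≤ 1 / 400)
    (ha : a = 1 / Real.sqrt 5)
    (π : (t : ℕ) → (Fin t → ℝ) → ℝ) (hπ : ∀ t, Measurable (π t)) :
    (7 : ENNReal) / 8 ≤
      lqrMeasure σ T
        {ω : Bool × (Fin T → ℝ) |
          (2 / 3 : ℝ) * T ≤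
            ∑ t ∈ Finset.Icc 1 T,
              (if 2 * σ / 5 ≤ |X a ε π ω t| then (1 : ℝ) else 0)} := by
  set S := {ω : Bool × (Fin T → ℝ) |
      (2 / 3 : ℝ) * T ≤
        ∑ t ∈ Finset.Icc 1 T, (if 2 * σ / 5 ≤ |X a ε π ω t| then (1 : ℝ) else 0)} with hSdef
  have hXeq : ∀ (s : Bool) (g : Fin T → ℝ) (t : ℕ),
      X a ε π (s, g) t = xv a (signVal s * Real.sqrt ε) π g t := fun s g t => rfl
  have hSmeas : MeasurableSet S := by
    have hsum : Measurable fun ω : Bool × (Fin T → ℝ) =>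
        ∑ t ∈ Finset.Icc 1 T, (if 2 * σ / 5 ≤ |X a ε π ω t| then (1 : ℝ) else 0) := by
      have h1 : Measurable fun p : (Fin T → ℝ) × Bool =>
          ∑ t ∈ Finset.Icc 1 T, (if 2 * σ / 5 ≤ |X a ε π (p.2, p.1) t| then (1 : ℝ) else 0) := by
        apply measurable_from_prod_countable_left
        intro s
        simp_rw [hXeq]
        exact Finset.measurable_sum _ fun t _ => Measurable.ite
          (measurableSet_le measurable_const
            (measurable_xv a (signVal s * Real.sqrt ε) π hπ t).abs)
          measurable_const measurable_const
      exact h1.comp measurable_swap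
    exact measurableSet_le measurable_const hsum
  have hpi : (Measure.pi fun _ : Fin T => gaussianReal 0 ⟨σ ^ 2, sq_nonneg σ⟩)
      = (Measure.pi fun _ : Fin T => gm σ) := rfl
  haveI : SFinite (Measure.pi fun _ : Fin T => gaussianReal 0 ⟨σ ^ 2, sq_nonneg σ⟩) := by
    rw [hpi]; infer_instance
  rw [lqrMeasure, Measure.prod_apply hSmeas]
  have hslice : ∀ s : Bool, (7 : ENNReal) / 8
      ≤ (Measure.pi fun _ : Fin T => gaussianReal 0 ⟨σ ^ 2, sq_nonneg σ⟩)
          (Prod.mk s ⁻¹' S) := by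
    intro s
    rw [hpi]
    have : Prod.mk s ⁻¹' S = {g : Fin T → ℝ | (2 / 3 : ℝ) * T ≤
        ∑ t ∈ Finset.Icc 1 T,
          (if 2 * σ / 5 ≤ |xv a (signVal s * Real.sqrt ε) π g t| then (1 : ℝ) else 0)} := by
      ext g
      simp only [hSdef, Set.mem_preimage, Set.mem_setOf_eq, hXeq]
    rw [this]
    exact core_bound σ hσ T hT a (signVal s * Real.sqrt ε) π hπ
  calc (7 : ENNReal) / 8
      = ∫⁻ _s, (7 : ENNReal) / 8 ∂((PMF.uniformOfFintype Bool).toMeasure) := by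
        rw [lintegral_const]
        rw [measure_univ, mul_one]
    _ ≤ ∫⁻ s, (Measure.pi fun _ : Fin T => gaussianReal 0 ⟨σ ^ 2, sq_nonneg σ⟩)
          (Prod.mk s ⁻¹' S) ∂((PMF.uniformOfFintype Bool).toMeasure) :=
        lintegral_mono fun s => hslice s


end LQRLowerBound
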